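/- Let n ≥ 1, d ≥ 1, η ∈ [0,1), ν ∈ (0,1] and ω_ran ≥ 0. Let u_1,…,u_n ∈ ℝ^d and let Z_1,…,Z_n be square-integrable random vectors in ℝ^d on a common probability space such that ‖E[Z_i] − u_i‖ ≤ η‖u_i‖ for every i ∈ {1,…,n}, and such that the aggregated variance bound E[‖(1/n)Σ_{i=1}^n (Z_i − E[Z_i])‖²] ≤ (ω_ran/n)·Σ_{i=1}^n ‖u_i‖² holds. Then E[‖(1/n)Σ_{i=1}^n (νZ_i − u_i)‖²] ≤ ((1 − ν + νη)² + ν²ω_ran)·(1/n)Σ_{i=1}^n ‖u_i‖². -/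

import Mathlib

open MeasureTheory

/-- Bound on the EF-BV aggregated stochastic gradient estimator: if each `Z i` compresses
`u i` with relative bias `η` and the collection has average relative variance `ωran`, then
for any `ν ∈ (0,1]`, `E‖(1/n)∑ᵢ(νZᵢ - uᵢ)‖² ≤ ((1-ν+νη)² + ν²ωran)·(1/n)∑ᵢ‖uᵢ‖²`. -/
theorem efbv_estimator_bound
    {n d : ℕ} (hn : 1 ≤ n) (hd : 1 ≤ d)
    {Ω : Type*} [MeasurableSpace Ω] (P : Measure Ω) [IsProbabilityMeasure P]
    (η ν ωran : ℝ) (hη0 : 0 ≤ η) (hη1 : η < 1) (hν0 : 0 < ν) (hν1 : ν ≤ 1)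
    (hωran : 0 ≤ ωran)
    (u : Fin n → EuclideanSpace ℝ (Fin d)) (Z : Fin n → Ω → EuclideanSpace ℝ (Fin d))
    (hZ : ∀ i, MemLp (Z i) 2 P)
    (hbias : ∀ i, ‖(∫ a, Z i a ∂P) - u i‖ ≤ η * ‖u i‖)
    (hvar : (∫ a, ‖(n : ℝ)⁻¹ • ∑ i, (Z i a - ∫ a', Z i a' ∂P)‖ ^ 2 ∂P) ≤
      (ωran / n) * ∑ i, ‖u i‖ ^ 2) :
    (∫ a, ‖(n : ℝ)⁻¹ • ∑ i, (ν • Z i a - u i)‖ ^ 2 ∂P) ≤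
      ((1 - ν + ν * η) ^ 2 + ν ^ 2 * ωran) * ((n : ℝ)⁻¹ * ∑ i, ‖u i‖ ^ 2) := by
  classical
  set m : Fin n → EuclideanSpace ℝ (Fin d) := fun i => ∫ a, Z i a ∂P with hm
  set W : Ω → EuclideanSpace ℝ (Fin d) :=
    fun a => (n : ℝ)⁻¹ • ∑ i, (Z i a - m i) with hWdef
  set b : EuclideanSpace ℝ (Fin d) := (n : ℝ)⁻¹ • ∑ i, (ν • m i - u i) with hb
  have hnpos : (0 : ℝ) < n := by exact_mod_cast hn
  have hnne : (n : ℝ) ≠ 0 := ne_of_gt hnpos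
  have hninv : (0 : ℝ) ≤ (n : ℝ)⁻¹ := by positivity
  -- integrability facts
  have hZint : ∀ i, Integrable (Z i) P := fun i => (hZ i).integrable (by norm_num)
  have hWmem : MemLp W 2 P := by
    refine MemLp.const_smul ?_ ((n : ℝ)⁻¹)
    have h0 := memLp_finset_sum' (μ := P) (p := 2) Finset.univ
      (f := fun (i : Fin n) (a : Ω) => Z i a - m i)
      (fun i _ => (hZ i).sub (memLp_const (m i)))
    have he : (∑ i : Fin n, fun a : Ω => Z i a - m i) =
        fun a : Ω => ∑ i : Fin n, (Z i a - m i) := by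
      funext a; simp
    rwa [he] at h0
  have hWint : Integrable W P := hWmem.integrable (by norm_num)
  have hWintsq : Integrable (fun a => ‖W a‖ ^ 2) P := by
    have := (memLp_two_iff_integrable_sq_norm hWmem.aestronglyMeasurable).mp hWmem
    simpa using this
  -- mean of W is 0
  have hInt : ∀ i : Fin n, Integrable (fun a => Z i a - m i) P :=
    fun i => (hZint i).sub (integrable_const (m i))
  have hWmean : (∫ a, W a ∂P) = 0 := by
    have hs : (∫ a, ∑ i, (Z i a - m i) ∂P) = ∑ i, ∫ a, (Z i a - m i) ∂P :=
      integral_finset_sum _ (fun i _ => hInt i)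
    rw [hWdef, integral_smul, hs]
    have : ∀ i : Fin n, (∫ a, (Z i a - m i) ∂P) = 0 := by
      intro i
      rw [integral_sub (hZint i) (integrable_const (m i)), integral_const]
      simp [hm]
    simp [this]
  -- rewrite the integrand
  have hrw : ∀ a : Ω, ((n : ℝ)⁻¹ • ∑ i, (ν • Z i a - u i)) = ν • W a + b := by
    intro a
    have hsum : (∑ i, (ν • Z i a - u i)) =
        ν • (∑ i, (Z i a - m i)) + ∑ i, (ν • m i - u i) := by
      rw [Finset.smul_sum, ← Finset.sum_add_distrib]
      refine Finset.sum_congr rfl fun i _ => ?_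
      rw [smul_sub]
      abel
    rw [hWdef, hb, hsum, smul_add, smul_comm ((n : ℝ)⁻¹) ν]
  -- expand the square
  have hexp : ∀ a : Ω,
      ‖ν • W a + b‖ ^ 2 =
        ν ^ 2 * ‖W a‖ ^ 2 + (2 * ν) * (inner ℝ (W a) b : ℝ) + ‖b‖ ^ 2 := by
    intro a
    rw [norm_add_sq_real, norm_smul, real_inner_smul_left, Real.norm_eq_abs,
      abs_of_pos hν0, mul_pow]
    ring
  -- inner term: rewrite as continuous linear map
  have hfun : (fun a => (inner ℝ (W a) b : ℝ)) = fun a => (innerSL ℝ b) (W a) := by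
    funext a
    simp only [innerSL_apply_apply]
    exact real_inner_comm _ _
  have hinnerint : Integrable (fun a => (inner ℝ (W a) b : ℝ)) P := by
    rw [hfun]
    exact (innerSL ℝ b).integrable_comp hWint
  have hinnermean : (∫ a, (inner ℝ (W a) b : ℝ) ∂P) = 0 := by
    rw [hfun, ContinuousLinearMap.integral_comp_comm _ hWint, hWmean]
    simp
  -- compute the integral
  have hcalc : (∫ a, ‖(n : ℝ)⁻¹ • ∑ i, (ν • Z i a - u i)‖ ^ 2 ∂P) =
      ν ^ 2 * (∫ a, ‖W a‖ ^ 2 ∂P) + ‖b‖ ^ 2 := by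
    have heq : (∫ a, ‖(n : ℝ)⁻¹ • ∑ i, (ν • Z i a - u i)‖ ^ 2 ∂P) =
        ∫ a, (ν ^ 2 * ‖W a‖ ^ 2 + (2 * ν) * (inner ℝ (W a) b : ℝ) + ‖b‖ ^ 2) ∂P := by
      refine integral_congr_ae (Filter.Eventually.of_forall fun a => ?_)
      show ‖(n : ℝ)⁻¹ • ∑ i, (ν • Z i a - u i)‖ ^ 2 = _
      rw [hrw a, hexp a]
    have h1 : Integrable (fun a => ν ^ 2 * ‖W a‖ ^ 2) P := hWintsq.const_mul _
    have h2 : Integrable (fun a => (2 * ν) * (inner ℝ (W a) b : ℝ)) P :=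
      hinnerint.const_mul _
    have h12 : Integrable
        (fun a => ν ^ 2 * ‖W a‖ ^ 2 + (2 * ν) * (inner ℝ (W a) b : ℝ)) P := h1.add h2
    have e1 : (∫ a, (ν ^ 2 * ‖W a‖ ^ 2 + (2 * ν) * (inner ℝ (W a) b : ℝ) + ‖b‖ ^ 2) ∂P)
        = (∫ a, (ν ^ 2 * ‖W a‖ ^ 2 + (2 * ν) * (inner ℝ (W a) b : ℝ)) ∂P)
          + ∫ _a, ‖b‖ ^ 2 ∂P := integral_add h12 (integrable_const _)
    have e2 : (∫ a, (ν ^ 2 * ‖W a‖ ^ 2 + (2 * ν) * (inner ℝ (W a) b : ℝ)) ∂P)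
        = (∫ a, ν ^ 2 * ‖W a‖ ^ 2 ∂P)
          + ∫ a, (2 * ν) * (inner ℝ (W a) b : ℝ) ∂P := integral_add h1 h2
    rw [heq, e1, e2, integral_const_mul, integral_const_mul, hinnermean,
      integral_const]
    simp
  rw [hcalc]
  -- bound variance term
  have hvar' : (∫ a, ‖W a‖ ^ 2 ∂P) ≤ (ωran / n) * ∑ i, ‖u i‖ ^ 2 := hvar
  -- bound bias term
  have hbnorm : ‖b‖ ≤ (n : ℝ)⁻¹ * ∑ i, (1 - ν + ν * η) * ‖u i‖ := by
    rw [hb, norm_smul, Real.norm_eq_abs, abs_of_nonneg hninv]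
    refine mul_le_mul_of_nonneg_left ?_ hninv
    refine (norm_sum_le _ _).trans (Finset.sum_le_sum fun i _ => ?_)
    have h1 : ν • m i - u i = ν • (m i - u i) + (ν - 1) • u i := by
      rw [smul_sub, sub_smul, one_smul]
      abel
    rw [h1]
    calc ‖ν • (m i - u i) + (ν - 1) • u i‖
        ≤ ‖ν • (m i - u i)‖ + ‖(ν - 1) • u i‖ := norm_add_le _ _
      _ = ν * ‖m i - u i‖ + (1 - ν) * ‖u i‖ := by
          rw [norm_smul, norm_smul, Real.norm_eq_abs, Real.norm_eq_abs,
            abs_of_pos hν0, abs_of_nonpos (by linarith)]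
          ring
      _ ≤ ν * (η * ‖u i‖) + (1 - ν) * ‖u i‖ := by
          have := hbias i
          nlinarith [norm_nonneg (u i)]
      _ = (1 - ν + ν * η) * ‖u i‖ := by ring
  have hbsq : ‖b‖ ^ 2 ≤ (1 - ν + ν * η) ^ 2 * ((n : ℝ)⁻¹ * ∑ i, ‖u i‖ ^ 2) := by
    have hc : (0 : ℝ) ≤ 1 - ν + ν * η := by nlinarith
    have h2 : ‖b‖ ^ 2 ≤ ((n : ℝ)⁻¹ * ∑ i, (1 - ν + ν * η) * ‖u i‖) ^ 2 :=
      pow_le_pow_left₀ (norm_nonneg b) hbnorm 2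
    refine h2.trans ?_
    have hCS : (∑ i, (1 - ν + ν * η) * ‖u i‖) ^ 2 ≤
        (n : ℝ) * ∑ i, ((1 - ν + ν * η) * ‖u i‖) ^ 2 := by
      have := sq_sum_le_card_mul_sum_sq
        (s := Finset.univ) (f := fun i : Fin n => (1 - ν + ν * η) * ‖u i‖)
      simpa using this
    have hsum2 : (∑ i, ((1 - ν + ν * η) * ‖u i‖) ^ 2) =
        (1 - ν + ν * η) ^ 2 * ∑ i, ‖u i‖ ^ 2 := by
      rw [Finset.mul_sum]
      exact Finset.sum_congr rfl fun i _ => by ring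
    have hstep : ((n : ℝ)⁻¹ * ∑ i, (1 - ν + ν * η) * ‖u i‖) ^ 2 =
        (n : ℝ)⁻¹ ^ 2 * (∑ i, (1 - ν + ν * η) * ‖u i‖) ^ 2 := by ring
    rw [hstep]
    calc (n : ℝ)⁻¹ ^ 2 * (∑ i, (1 - ν + ν * η) * ‖u i‖) ^ 2
        ≤ (n : ℝ)⁻¹ ^ 2 * ((n : ℝ) * ∑ i, ((1 - ν + ν * η) * ‖u i‖) ^ 2) :=
          mul_le_mul_of_nonneg_left hCS (by positivity)
      _ = (1 - ν + ν * η) ^ 2 * ((n : ℝ)⁻¹ * ∑ i, ‖u i‖ ^ 2) := by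
          rw [hsum2]
          field_simp
  have hvterm : ν ^ 2 * (∫ a, ‖W a‖ ^ 2 ∂P) ≤
      ν ^ 2 * ωran * ((n : ℝ)⁻¹ * ∑ i, ‖u i‖ ^ 2) := by
    calc ν ^ 2 * (∫ a, ‖W a‖ ^ 2 ∂P)
        ≤ ν ^ 2 * ((ωran / n) * ∑ i, ‖u i‖ ^ 2) :=
          mul_le_mul_of_nonneg_left hvar' (by positivity)
      _ = ν ^ 2 * ωran * ((n : ℝ)⁻¹ * ∑ i, ‖u i‖ ^ 2) := by
          rw [div_eq_mul_inv]
          ring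
  linarith [hvterm, hbsq]
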